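/- Let α, α′ : A → 2^N be arbitrary maps with nonempty vanishing sets C_α = {x : α(x) = ∅} and C_{α′} = {x : α′(x) = ∅}, each implementable as a local compromiser assignment for its own constraint. Suppose α(x) ⊆ α′(x) for every allocation x, and α′ satisfies forward consistency. Then for every preference profile ≻ and every agent i, LP_α(≻)_i ≿_i LP_{α′}(≻)_i. -/

import Mathlib

/- Common framework: constrained allocation, local priority mechanisms
   (Root & Ahn, "Local Priority Mechanisms"). Agents `N`, objects `O`.
   A strict preference is encoded as a `LinearOrder` on `O`, where
   `pi.lt b a` means `a` is strictly preferred to `b`. -/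

open Classical

noncomputable section

variable {N O : Type}

/-- `a` is strictly preferred to `b` under `pi`. -/
def sPref (pi : LinearOrder O) (a b : O) : Prop := pi.lt b a

/-- `a` is weakly preferred to `b` under `pi`. -/
def wPref (pi : LinearOrder O) (a b : O) : Prop := a = b ∨ pi.lt b a

/-- The favourite (top-ranked) object under `pi`. -/
def topObj [Fintype O] [Nonempty O] (pi : LinearOrder O) : O :=
  @Finset.max' O pi Finset.univ Finset.univ_nonempty

/-- `tau1 p` is the allocation assigning each agent her favourite object. -/
def tau1 [Fintype O] [Nonempty O] (p : N → LinearOrder O) : N → O :=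
  fun i => topObj (p i)

/-- The strict lower contour set of `a` under `pi`, as a finset. -/
def LCfin [Fintype O] (pi : LinearOrder O) (a : O) : Finset O :=
  Finset.univ.filter fun b => pi.lt b a

/-- The best element of the strict lower contour set of `a` (junk value `a` if empty). -/
def bestLC [Fintype O] (pi : LinearOrder O) (a : O) : O :=
  if h : (LCfin pi a).Nonempty then @Finset.max' O pi _ h else a

/-- At `x`, no local compromiser has an empty strict lower contour set. -/
def lpNoFail [Fintype O] (α : (N → O) → Set N) (p : N → LinearOrder O) (x : N → O) : Prop :=
  ∀ i ∈ α x, (LCfin (p i) (x i)).Nonempty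

/-- One step of the local priority algorithm: all local compromisers move to their
next-favourite object, everyone else stays put. -/
def lpStep [Fintype O] (α : (N → O) → Set N) (p : N → LinearOrder O) (x : N → O) : N → O :=
  fun k => if k ∈ α x then bestLC (p k) (x k) else x k

/-- The local priority algorithm for `α` at profile `p` terminates (without failure)
returning the feasible allocation `y`. -/
def lpRunsTo [Fintype O] [Nonempty O] (C : Set (N → O)) (α : (N → O) → Set N)
    (p : N → LinearOrder O) (y : N → O) : Prop :=
  ∃ (m : ℕ) (x : ℕ → N → O),
    x 0 = tau1 p ∧
    (∀ t < m, x t ∉ C ∧ lpNoFail α p (x t) ∧ x (t + 1) = lpStep α p (x t)) ∧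
    x m = y ∧ y ∈ C

/-- `α` is a local compromiser assignment for the constraint `C`. -/
def IsLCA (C : Set (N → O)) (α : (N → O) → Set N) : Prop :=
  ∀ x, (x ∉ C → (α x).Nonempty) ∧ (x ∈ C → α x = ∅)

/-- `α` is implementable: the local priority algorithm returns a feasible
allocation (never the failure symbol) on every profile. -/
def lpImplementable [Fintype O] [Nonempty O] (C : Set (N → O)) (α : (N → O) → Set N) : Prop :=
  ∀ p : N → LinearOrder O, ∃ y, lpRunsTo C α p y

/-- `α` is an implementable local compromiser assignment for `C` inducing the mechanism `f`,
i.e. `f = LP_α`. -/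
def lpInduces [Fintype O] [Nonempty O] (C : Set (N → O)) (α : (N → O) → Set N)
    (f : (N → LinearOrder O) → N → O) : Prop :=
  IsLCA C α ∧ ∀ p, lpRunsTo C α p (f p)

/-- The local priority mechanism `LP_α` (well defined whenever `α` is implementable,
since the algorithm is deterministic). -/
def LPmech [Fintype O] [Nonempty O] (C : Set (N → O)) (α : (N → O) → Set N)
    (p : N → LinearOrder O) : N → O :=
  if h : ∃ y, lpRunsTo C α p y then h.choose else fun _ => Classical.arbitrary O

/-- Group strategy-proofness. -/
def GSP (f : (N → LinearOrder O) → N → O) : Prop :=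
  ∀ (p p' : N → LinearOrder O) (M : Set N), M.Nonempty → (∀ j ∉ M, p' j = p j) →
    ¬ ((∀ j ∈ M, wPref (p j) (f p' j) (f p j)) ∧ ∃ k ∈ M, sPref (p k) (f p' k) (f p k))

/-- (Individual) strategy-proofness. -/
def StratProof (f : (N → LinearOrder O) → N → O) : Prop :=
  ∀ (p p' : N → LinearOrder O) (i : N), (∀ j, j ≠ i → p' j = p j) →
    ¬ sPref (p i) (f p' i) (f p i)

/-- Nonbossiness. -/
def Nonbossy (f : (N → LinearOrder O) → N → O) : Prop :=
  ∀ (p p' : N → LinearOrder O) (i : N), (∀ j, j ≠ i → p' j = p j) →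
    f p' i = f p i → f p' = f p

/-- Maskin monotonicity. -/
def MaskinMono (f : (N → LinearOrder O) → N → O) : Prop :=
  ∀ p p' : N → LinearOrder O,
    (∀ (i : N) (b : O), (p i).lt b (f p i) → (p' i).lt b (f p i)) → f p' = f p

/-- Unanimity. -/
def Unanimity [Fintype O] [Nonempty O] (C : Set (N → O))
    (f : (N → LinearOrder O) → N → O) : Prop :=
  ∀ p, tau1 p ∈ C → f p = tau1 p

/-- The Fixed compromiser condition. -/
def FixedComp [Fintype O] [Nonempty O] (C : Set (N → O))
    (f : (N → LinearOrder O) → N → O) : Prop :=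
  ∀ μ, μ ∉ C → ∃ i : N, ∀ p, tau1 p = μ → f p i ≠ μ i

/-- `pi'` is obtained from `pi` by moving `c` to the bottom of the ranking. -/
def MoveBottom (pi pi' : LinearOrder O) (c : O) : Prop :=
  (∀ b, b ≠ c → pi'.lt c b) ∧ (∀ a b, a ≠ c → b ≠ c → (pi'.lt a b ↔ pi.lt a b))

/-- Compromiser invariance. -/
def CompInv [Fintype O] [Nonempty O] (C : Set (N → O))
    (f : (N → LinearOrder O) → N → O) : Prop :=
  ∀ μ, μ ∉ C → ∀ p p' : N → LinearOrder O, tau1 p = μ →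
    (∀ i, (∀ q, tau1 q = μ → f q i ≠ μ i) → MoveBottom (p i) (p' i) (μ i)) →
    (∀ i, ¬ (∀ q, tau1 q = μ → f q i ≠ μ i) → p' i = p i) →
    f p' = f p

/-- Pareto efficiency relative to the constraint `C`. -/
def ParetoEff (C : Set (N → O)) (f : (N → LinearOrder O) → N → O) : Prop :=
  ∀ p, ¬ ∃ ν ∈ C, (∀ i, wPref (p i) (ν i) (f p i)) ∧ ∃ k, sPref (p k) (ν k) (f p k)

/-- `diffSet x y = d(x,y)`, the set of agents on which `x` and `y` differ. -/
def diffSet (x y : N → O) : Set N := {i | x i ≠ y i}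

/-- Forward consistency. -/
def ForwardCons (α : (N → O) → Set N) : Prop :=
  ∀ x y : N → O, diffSet x y ⊆ α x → α x \ diffSet x y ⊆ α y

/-- The sequence of allocations `z 0, …, z m` is acyclic. -/
def AcyclicSeq (z : ℕ → N → O) (m : ℕ) : Prop :=
  ∀ (i : N) (r s t : ℕ), r < s → s < t → t ≤ m → z r i = z t i → z s i = z r i

/-- `x` and `y` are `i`-connected under `α`. -/
def IConn (α : (N → O) → Set N) (i : N) (x y : N → O) : Prop :=
  ∃ m : ℕ, 1 ≤ m ∧ ∃ z : ℕ → N → O,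
    z 0 = x ∧ z m = y ∧ AcyclicSeq z m ∧ diffSet (z 0) (z 1) = {i} ∧
    ∀ l < m, diffSet (z l) (z (l + 1)) ⊆ α (z l)

/-- Backward consistency. -/
def BackCons (C : Set (N → O)) (α : (N → O) → Set N) : Prop :=
  ∀ (i : N) (x y : N → O), x ∉ C → y ∉ C → IConn α i x y →
    ∀ x' : N → O, diffSet x x' ⊆ α y → i ∉ diffSet x x' → i ∈ α x'

/-- The pointwise union of all implementable local compromiser assignments inducing `f`. -/
def alphaUnionAll [Fintype O] [Nonempty O] (C : Set (N → O))
    (f : (N → LinearOrder O) → N → O) : (N → O) → Set N :=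
  fun x => {i | ∃ β, lpInduces C β f ∧ i ∈ β x}

end

-- auxiliary development, to be inserted before the theorem
noncomputable section Aux

open Classical

variable {N O : Type}

section OrderHelpers
variable [Fintype O]

theorem bestLC_lt (pi : LinearOrder O) (a : O) (h : (LCfin pi a).Nonempty) :
    pi.lt (bestLC pi a) a := by
  unfold bestLC
  rw [dif_pos h]
  have h2 := @Finset.max'_mem O pi _ h
  simp only [LCfin, Finset.mem_filter] at h2
  exact h2.2

theorem le_bestLC (pi : LinearOrder O) {a b : O} (hb : pi.lt b a) :
    pi.le b (bestLC pi a) := by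
  have hmem : b ∈ LCfin pi a := by simp [LCfin, hb]
  have hne : (LCfin pi a).Nonempty := ⟨b, hmem⟩
  unfold bestLC
  rw [dif_pos hne]
  exact @Finset.le_max' O pi _ b hmem

theorem bestLC_ne (pi : LinearOrder O) (a : O) (h : (LCfin pi a).Nonempty) :
    bestLC pi a ≠ a := by
  letI := pi
  exact ne_of_lt (bestLC_lt pi a h)

end OrderHelpers

/-- A minimal downward hop for `α'` at profile `p`: each agent either stays put or,
being a compromiser with a nonempty lower contour set, moves to her next-best object. -/
def MinHop [Fintype O] (α' : (N → O) → Set N) (p : N → LinearOrder O) (x x' : N → O) : Prop :=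
  ∀ i, x' i = x i ∨ (i ∈ α' x ∧ (LCfin (p i) (x i)).Nonempty ∧ x' i = bestLC (p i) (x i))

/-- A finite chain of minimal downward hops. -/
def MinPath [Fintype O] (α' : (N → O) → Set N) (p : N → LinearOrder O) (x z : N → O) : Prop :=
  ∃ (k : ℕ) (w : ℕ → N → O), w 0 = x ∧ w k = z ∧ ∀ j < k, MinHop α' p (w j) (w (j + 1))

section PathLemmas
variable [Fintype O] {α' : (N → O) → Set N} {p : N → LinearOrder O}

theorem minHop_le {x x' : N → O} (h : MinHop α' p x x') (i : N) :
    (p i).le (x' i) (x i) := by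
  letI := p i
  rcases h i with he | ⟨_, hlc, hv⟩
  · exact le_of_eq he
  · rw [hv]; exact le_of_lt (bestLC_lt (p i) (x i) hlc)

theorem minHop_diff_sub {x x' : N → O} (h : MinHop α' p x x') :
    diffSet x x' ⊆ α' x := by
  intro j hj
  rcases h j with he | ⟨ha, _, _⟩
  · exact absurd he.symm hj
  · exact ha

theorem minHop_mem (hfc : ForwardCons α') {x x' : N → O} (h : MinHop α' p x x')
    {i : N} (hi : i ∈ α' x) (he : x' i = x i) : i ∈ α' x' := by
  refine hfc x x' (minHop_diff_sub h) ⟨hi, ?_⟩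
  simp only [diffSet, Set.mem_setOf_eq, not_not]
  exact he.symm

theorem pathLe : ∀ (k : ℕ) (w : ℕ → N → O),
    (∀ j < k, MinHop α' p (w j) (w (j + 1))) → ∀ i, (p i).le (w k i) (w 0 i) := by
  intro k
  induction k with
  | zero => intro w _ i; letI := p i; exact le_refl _
  | succ k ih =>
    intro w hw i
    letI := p i
    have h1 : (p i).le (w (k + 1) i) (w k i) :=
      minHop_le (hw k (Nat.lt_succ_self k)) i
    have h2 : (p i).le (w k i) (w 0 i) :=
      ih w (fun j hj => hw j (Nat.lt_succ_of_lt hj)) i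
    exact le_trans h1 h2

theorem pathMem (hfc : ForwardCons α') : ∀ (k : ℕ) (w : ℕ → N → O),
    (∀ j < k, MinHop α' p (w j) (w (j + 1))) →
    ∀ i, i ∈ α' (w 0) → w k i = w 0 i → i ∈ α' (w k) := by
  intro k
  induction k with
  | zero => intro w _ i hi _; exact hi
  | succ k ih =>
    intro w hw i hi he
    letI := p i
    have hhop := hw k (Nat.lt_succ_self k)
    have h1 : (p i).le (w (k + 1) i) (w k i) := minHop_le hhop i
    have h2 : (p i).le (w k i) (w 0 i) :=
      pathLe k w (fun j hj => hw j (Nat.lt_succ_of_lt hj)) i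
    have hke : w k i = w 0 i := by
      refine le_antisymm h2 ?_
      rw [← he]; exact h1
    have hmem : i ∈ α' (w k) := ih w (fun j hj => hw j (Nat.lt_succ_of_lt hj)) i hi hke
    exact minHop_mem hfc hhop hmem (he.trans hke.symm)

theorem minPath_refl (x : N → O) : MinPath α' p x x :=
  ⟨0, fun _ => x, rfl, rfl, fun j hj => absurd hj (Nat.not_lt_zero j)⟩

theorem minPath_le {x z : N → O} (h : MinPath α' p x z) (i : N) :
    (p i).le (z i) (x i) := by
  obtain ⟨k, w, h0, hk, hw⟩ := h
  rw [← h0, ← hk]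
  exact pathLe k w hw i

theorem minPath_mem (hfc : ForwardCons α') {x z : N → O} (h : MinPath α' p x z)
    {i : N} (hi : i ∈ α' x) (he : z i = x i) : i ∈ α' z := by
  obtain ⟨k, w, h0, hk, hw⟩ := h
  subst h0; subst hk
  exact pathMem hfc k w hw i hi he

theorem minPath_cons {a b c : N → O} (hab : MinHop α' p a b) (hbc : MinPath α' p b c) :
    MinPath α' p a c := by
  obtain ⟨k, w, h0, hk, hw⟩ := hbc
  refine ⟨k + 1, fun j => Nat.casesOn j a (fun j' => w j'), rfl, hk, ?_⟩
  intro j hj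
  cases j with
  | zero => simpa [h0] using hab
  | succ j' => exact hw j' (Nat.lt_of_succ_lt_succ hj)

theorem minPath_snoc {a b c : N → O} (hab : MinPath α' p a b) (hbc : MinHop α' p b c) :
    MinPath α' p a c := by
  obtain ⟨k, w, h0, hk, hw⟩ := hab
  refine ⟨k + 1, fun j => if j = k + 1 then c else w j, by simp [h0], by simp, ?_⟩
  intro j hj
  rcases Nat.lt_or_ge j k with hjk | hjk
  · have hj1 : j ≠ k + 1 := by omega
    have hj2 : j + 1 ≠ k + 1 := by omega
    simpa [hj1, hj2, Nat.ne_of_lt hjk] using hw j hjk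
  · have hjeq : j = k := by omega
    subst hjeq
    have hj1 : j ≠ j + 1 := by omega
    simpa [hj1, hk] using hbc

end PathLemmas

section Exchange
variable [Fintype O] {α' : (N → O) → Set N} {p : N → LinearOrder O}

theorem exchange_aux (hfc : ForwardCons α') : ∀ (k : ℕ) (w : ℕ → N → O) (x' : N → O),
    (∀ j < k, MinHop α' p (w j) (w (j + 1))) → MinHop α' p (w 0) x' →
    (∀ i, (p i).le (w k i) (x' i)) → MinPath α' p x' (w k) := by
  intro k
  induction k with
  | zero =>
    intro w x' _ hx' hle
    have hxe : x' = w 0 := by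
      funext i
      letI := p i
      rcases hx' i with he | ⟨_, hlc, hv⟩
      · exact he
      · exfalso
        have h1 : (p i).lt (x' i) (w 0 i) := by
          rw [hv]; exact bestLC_lt (p i) (w 0 i) hlc
        exact absurd (lt_of_le_of_lt (hle i) h1) (lt_irrefl _)
    rw [hxe]
    exact minPath_refl _
  | succ k ih =>
    intro w x' hw hx' hle
    have hop1 : MinHop α' p (w 0) (w 1) := hw 0 (Nat.succ_pos k)
    set w' : N → O :=
      fun i => if x' i = w 0 i ∧ w 1 i = w 0 i then w 0 i else bestLC (p i) (w 0 i) with hw'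
    -- basic facts about w' per agent
    have H1 : MinHop α' p x' w' := by
      intro i
      rcases hx' i with hxe | ⟨hxa, hxlc, hxv⟩
      · rcases hop1 i with h1e | ⟨h1a, h1lc, h1v⟩
        · left; simp only [hw']; rw [if_pos ⟨hxe, h1e⟩, hxe]
        · -- x' stays, w1 moves: w' i = bestLC (w 0 i); x' must move too
          right
          have h1ne : ¬ (x' i = w 0 i ∧ w 1 i = w 0 i) := by
            rintro ⟨_, h⟩
            exact bestLC_ne (p i) (w 0 i) h1lc (h1v ▸ h)
          have hmem : i ∈ α' x' := by
            refine minHop_mem hfc hx' h1a hxe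
          refine ⟨hmem, by rw [hxe]; exact h1lc, ?_⟩
          simp only [hw']
          rw [if_neg h1ne, hxe]
      · -- x' moved
        left
        have hxne : ¬ (x' i = w 0 i ∧ w 1 i = w 0 i) := by
          rintro ⟨h, _⟩
          exact bestLC_ne (p i) (w 0 i) hxlc (hxv ▸ h)
        simp only [hw']
        rw [if_neg hxne, hxv]
    have H2 : MinHop α' p (w 1) w' := by
      intro i
      rcases hop1 i with h1e | ⟨h1a, h1lc, h1v⟩
      · rcases hx' i with hxe | ⟨hxa, hxlc, hxv⟩
        · left; simp only [hw']; rw [if_pos ⟨hxe, h1e⟩, h1e]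
        · -- w1 stays, x' moves
          right
          have hxne : ¬ (x' i = w 0 i ∧ w 1 i = w 0 i) := by
            rintro ⟨h, _⟩
            exact bestLC_ne (p i) (w 0 i) hxlc (hxv ▸ h)
          have hmem : i ∈ α' (w 1) := minHop_mem hfc hop1 hxa h1e
          refine ⟨hmem, by rw [h1e]; exact hxlc, ?_⟩
          simp only [hw']
          rw [if_neg hxne, h1e]
      · left
        have h1ne : ¬ (x' i = w 0 i ∧ w 1 i = w 0 i) := by
          rintro ⟨_, h⟩
          exact bestLC_ne (p i) (w 0 i) h1lc (h1v ▸ h)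
        simp only [hw']
        rw [if_neg h1ne, h1v]
    have H3 : ∀ i, (p i).le (w (k + 1) i) (w' i) := by
      intro i
      letI := p i
      by_cases hc : x' i = w 0 i ∧ w 1 i = w 0 i
      · have : w' i = w 0 i := by simp only [hw']; rw [if_pos hc]
        rw [this]
        exact pathLe (k + 1) w hw i
      · have hwv : w' i = bestLC (p i) (w 0 i) := by simp only [hw']; rw [if_neg hc]
        rcases hx' i with hxe | ⟨_, _, hxv⟩
        · -- x' stays at i, so w 1 must have moved, and w' i = w 1 i
          rcases hop1 i with h1e | ⟨_, _, h1v⟩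
          · exact absurd ⟨hxe, h1e⟩ hc
          · rw [hwv, ← h1v]
            exact pathLe k (fun j => w (j + 1)) (fun j hj => hw (j + 1) (Nat.succ_lt_succ hj)) i
        · rw [hwv, ← hxv]
          exact hle i
    have hshift : ∀ j < k, MinHop α' p ((fun j => w (j + 1)) j) ((fun j => w (j + 1)) (j + 1)) :=
      fun j hj => hw (j + 1) (Nat.succ_lt_succ hj)
    have hmain : MinPath α' p w' (w (k + 1)) :=
      ih (fun j => w (j + 1)) w' hshift H2 H3
    exact minPath_cons H1 hmain

theorem exchange (hfc : ForwardCons α') {x x' z : N → O} (hpath : MinPath α' p x z)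
    (hhop : MinHop α' p x x') (hle : ∀ i, (p i).le (z i) (x' i)) : MinPath α' p x' z := by
  obtain ⟨k, w, h0, hk, hw⟩ := hpath
  subst h0; subst hk
  exact exchange_aux hfc k w x' hw hhop hle

end Exchange

section Runs
variable [Fintype O] [Nonempty O]

theorem run_char {C : Set (N → O)} {α : (N → O) → Set N} {p : N → LinearOrder O} {y : N → O}
    (h : lpRunsTo C α p y) :
    ∃ m : ℕ, (lpStep α p)^[m] (tau1 p) = y ∧
      (∀ t < m, (lpStep α p)^[t] (tau1 p) ∉ C ∧ lpNoFail α p ((lpStep α p)^[t] (tau1 p))) ∧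
      y ∈ C := by
  obtain ⟨m, x, h0, hstep, hm, hyC⟩ := h
  have key : ∀ t, t ≤ m → (lpStep α p)^[t] (tau1 p) = x t := by
    intro t
    induction t with
    | zero => intro _; simpa using h0.symm
    | succ t iht =>
      intro ht
      have htm : t < m := Nat.lt_of_succ_le ht
      rw [Function.iterate_succ_apply', iht (le_of_lt htm), ← (hstep t htm).2.2]
  refine ⟨m, by rw [key m le_rfl, hm], ?_, hyC⟩
  intro t ht
  rw [key t (le_of_lt ht)]
  exact ⟨(hstep t ht).1, (hstep t ht).2.1⟩

theorem run_unique {C : Set (N → O)} {α : (N → O) → Set N} {p : N → LinearOrder O} {y y' : N → O}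
    (h : lpRunsTo C α p y) (h' : lpRunsTo C α p y') : y = y' := by
  obtain ⟨m, hXm, hlt, hyC⟩ := run_char h
  obtain ⟨m', hXm', hlt', hyC'⟩ := run_char h'
  have hmm : m = m' := by
    refine le_antisymm ?_ ?_
    · by_contra hc
      exact (hlt m' (Nat.lt_of_not_le hc)).1 (hXm' ▸ hyC')
    · by_contra hc
      exact (hlt' m (Nat.lt_of_not_le hc)).1 (hXm ▸ hyC)
  rw [← hXm, ← hXm', hmm]

theorem run_full {α : (N → O) → Set N} {p : N → LinearOrder O} {y : N → O}
    (h : lpRunsTo {x : N → O | α x = ∅} α p y) :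
    ∃ m : ℕ, (∀ t, lpNoFail α p ((lpStep α p)^[t] (tau1 p))) ∧
      ∀ t, m ≤ t → (lpStep α p)^[t] (tau1 p) = y := by
  obtain ⟨m, hXm, hlt, hyC⟩ := run_char h
  have hy0 : α y = ∅ := hyC
  have hstepy : lpStep α p y = y := by
    funext k
    simp only [lpStep, hy0]
    simp
  have hstab : ∀ t, m ≤ t → (lpStep α p)^[t] (tau1 p) = y := by
    intro t
    induction t with
    | zero => intro ht; rw [Nat.le_zero.mp ht] at hXm; simpa using hXm
    | succ t iht =>
      intro ht
      rcases Nat.lt_or_ge m (t + 1) with hlt1 | hge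
      · rw [Function.iterate_succ_apply', iht (Nat.lt_succ_iff.mp hlt1), hstepy]
      · have : m = t + 1 := le_antisymm ht hge
        rw [← this]; exact hXm
  refine ⟨m, ?_, hstab⟩
  intro t
  rcases Nat.lt_or_ge t m with htm | htm
  · exact (hlt t htm).2
  · intro i hi
    rw [hstab t htm, hy0] at hi
    exact absurd hi (Set.notMem_empty i)

end Runs

end Aux

/-- Proposition 6: if `α ⊆ α'` pointwise, each is implementable for
its own vanishing-set constraint, and `α'` is forward consistent, then every agent
weakly prefers the outcome of `LP_α` to the outcome of `LP_{α'}` at every profile. -/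
theorem pointwise_smaller_lca_better
    {N O : Type} [Fintype N] [Fintype O] [Nonempty O]
    (α α' : (N → O) → Set N)
    (h1 : {x : N → O | α x = ∅}.Nonempty) (h2 : {x : N → O | α' x = ∅}.Nonempty)
    (himp : lpImplementable {x : N → O | α x = ∅} α)
    (himp' : lpImplementable {x : N → O | α' x = ∅} α')
    (hsub : ∀ x, α x ⊆ α' x) (hfc : ForwardCons α') :
    ∀ (p : N → LinearOrder O) (i : N),
      wPref (p i)
        (LPmech {x : N → O | α x = ∅} α p i)
        (LPmech {x : N → O | α' x = ∅} α' p i) := by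
  intro p i
  have hexα : ∃ y, lpRunsTo {x : N → O | α x = ∅} α p y := himp p
  have hexα' : ∃ y, lpRunsTo {x : N → O | α' x = ∅} α' p y := himp' p
  have hrunα : lpRunsTo {x : N → O | α x = ∅} α p (LPmech {x : N → O | α x = ∅} α p) := by
    rw [LPmech, dif_pos hexα]
    exact hexα.choose_spec
  have hrunα' : lpRunsTo {x : N → O | α' x = ∅} α' p
      (LPmech {x : N → O | α' x = ∅} α' p) := by
    rw [LPmech, dif_pos hexα']
    exact hexα'.choose_spec
  obtain ⟨m, hnfX, hstabX⟩ := run_full hrunα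
  obtain ⟨m', hnfY, hstabY⟩ := run_full hrunα'
  set X : ℕ → N → O := fun t => (lpStep α p)^[t] (tau1 p) with hX
  set Y : ℕ → N → O := fun t => (lpStep α' p)^[t] (tau1 p) with hY
  -- one step of each algorithm is a minimal hop for α'
  have hhopY : ∀ t, MinHop α' p (Y t) (Y (t + 1)) := by
    intro t j
    by_cases hj : j ∈ α' (Y t)
    · right
      refine ⟨hj, hnfY t j hj, ?_⟩
      have : Y (t + 1) = lpStep α' p (Y t) := Function.iterate_succ_apply' _ _ _
      rw [this, lpStep, if_pos hj]
    · left
      have : Y (t + 1) = lpStep α' p (Y t) := Function.iterate_succ_apply' _ _ _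
      rw [this, lpStep, if_neg hj]
  have hhopX : ∀ t, MinHop α' p (X t) (X (t + 1)) := by
    intro t j
    by_cases hj : j ∈ α (X t)
    · right
      refine ⟨hsub _ hj, hnfX t j hj, ?_⟩
      have : X (t + 1) = lpStep α p (X t) := Function.iterate_succ_apply' _ _ _
      rw [this, lpStep, if_pos hj]
    · left
      have : X (t + 1) = lpStep α p (X t) := Function.iterate_succ_apply' _ _ _
      rw [this, lpStep, if_neg hj]
  -- the key invariant
  have key : ∀ t, MinPath α' p (X t) (Y t) := by
    intro t
    induction t with
    | zero => exact minPath_refl _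
    | succ t ih =>
      have hP : MinPath α' p (X t) (Y (t + 1)) := minPath_snoc ih (hhopY t)
      refine exchange hfc hP (hhopX t) ?_
      intro j
      letI := p j
      have hY1 : (p j).le (Y (t + 1) j) (Y t j) := minHop_le (hhopY t) j
      have hYX : (p j).le (Y t j) (X t j) := minPath_le ih j
      by_cases hj : j ∈ α (X t)
      · have hXv : X (t + 1) j = bestLC (p j) (X t j) := by
          have h5 : X (t + 1) = lpStep α p (X t) := Function.iterate_succ_apply' _ _ _
          rw [h5, lpStep, if_pos hj]
        by_cases heq : Y t j = X t j
        · have hmem : j ∈ α' (Y t) := minPath_mem hfc ih (hsub _ hj) heq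
          have hYv : Y (t + 1) j = bestLC (p j) (Y t j) := by
            have h5 : Y (t + 1) = lpStep α' p (Y t) := Function.iterate_succ_apply' _ _ _
            rw [h5, lpStep, if_pos hmem]
          rw [hYv, hXv, heq]
        · have hlt : (p j).lt (Y t j) (X t j) := lt_of_le_of_ne hYX heq
          have h6 : (p j).le (Y t j) (bestLC (p j) (X t j)) := le_bestLC (p j) hlt
          rw [hXv]
          exact le_trans hY1 h6
      · have hXv : X (t + 1) j = X t j := by
          have h5 : X (t + 1) = lpStep α p (X t) := Function.iterate_succ_apply' _ _ _
          rw [h5, lpStep, if_neg hj]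
        rw [hXv]
        exact le_trans hY1 hYX
  -- conclude at large time
  set T := max m m' with hT
  have hXT : X T = LPmech {x : N → O | α x = ∅} α p := hstabX T (le_max_left m m')
  have hYT : Y T = LPmech {x : N → O | α' x = ∅} α' p := hstabY T (le_max_right m m')
  have hle : (p i).le (Y T i) (X T i) := minPath_le (key T) i
  rw [hXT, hYT] at hle
  letI := p i
  rcases lt_or_eq_of_le hle with hlt | heq
  · exact Or.inr hlt
  · exact Or.inl heq.symm
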